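/- Let (X,d,T) be a topological dynamical system and μ a T-invariant Borel probability measure. If μ×μ({(x,y) ∈ X×X : F(x,y) = 0}) = 1, then μ is ergodic, where F is the weak-mean pseudometric. -/

import Mathlib

open Filter Metric Set

variable {X : Type*} [MetricSpace X]

/-- The maximal cardinality of an `(n,δ)`-match of `x` and `y`: an order-preserving
bijection `π : D(π) → R(π)` between subsets of `{0,…,n-1}` such that
`d(T^i x, T^{π i} y) < δ` for all `i ∈ D(π)`, encoded by a pair of strictly
increasing enumerations of `D(π)` and `R(π)`. -/
noncomputable def fkFit (T : X → X) (n : ℕ) (δ : ℝ) (x y : X) : ℕ :=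
  sSup {k : ℕ | ∃ i j : Fin k → Fin n, StrictMono i ∧ StrictMono j ∧
    ∀ s, dist (T^[(i s : ℕ)] x) (T^[(j s : ℕ)] y) < δ}

/-- `f̄_{n,δ}(x,y) = 1 - (max match)/n`. -/
noncomputable def fkF (T : X → X) (n : ℕ) (δ : ℝ) (x y : X) : ℝ :=
  1 - (fkFit T n δ x y : ℝ) / n

/-- The Feldman–Katok metric `d_{FK_n}`. -/
noncomputable def dFKn (T : X → X) (n : ℕ) (x y : X) : ℝ :=
  sInf {δ : ℝ | 0 < δ ∧ fkF T n δ x y < δ}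

/-- The Feldman–Katok pseudometric `d_{FK}`. -/
noncomputable def dFK (T : X → X) (x y : X) : ℝ :=
  sInf {δ : ℝ | 0 < δ ∧ Filter.limsup (fun n => fkF T n δ x y) atTop < δ}

/-- The maximal cardinality of an `(n,δ)*`-match of `x` and `y`: a not necessarily
order-preserving bijection `π : D(π) → R(π)` between subsets of `{0,…,n-1}` with
`d(T^i x, T^{π i} y) < δ` on its domain, encoded by a pair of injections. -/
noncomputable def wFit (T : X → X) (n : ℕ) (δ : ℝ) (x y : X) : ℕ :=
  sSup {k : ℕ | ∃ i j : Fin k → Fin n, Function.Injective i ∧ Function.Injective j ∧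
    ∀ s, dist (T^[(i s : ℕ)] x) (T^[(j s : ℕ)] y) < δ}

/-- `f̃_{n,δ}(x,y) = 1 - (max match)/n`. -/
noncomputable def wFbar (T : X → X) (n : ℕ) (δ : ℝ) (x y : X) : ℝ :=
  1 - (wFit T n δ x y : ℝ) / n

/-- The Feldman–Katok pseudometric without the order-preserving requirement. -/
noncomputable def dFKt (T : X → X) (x y : X) : ℝ :=
  sInf {δ : ℝ | 0 < δ ∧ Filter.limsup (fun n => wFbar T n δ x y) atTop < δ}

/-- `F_n(x,y) = (1/n) inf_{σ ∈ S_n} ∑_{k<n} d(T^k x, T^{σ k} y)`. -/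
noncomputable def weakMeanN (T : X → X) (n : ℕ) (x y : X) : ℝ :=
  (1 / n : ℝ) * ⨅ σ : Equiv.Perm (Fin n),
    ∑ k : Fin n, dist (T^[(k : ℕ)] x) (T^[(σ k : ℕ)] y)

/-- The weak-mean pseudometric `F(x,y) = limsup_n F_n(x,y)`. -/
noncomputable def weakMean (T : X → X) (x y : X) : ℝ :=
  Filter.limsup (fun n => weakMeanN T n x y) Filter.atTop

open MeasureTheory

/-! ### Auxiliary lemmas for the proof -/

theorem wm_exists_sep {K L : Set X} (hK : IsCompact K) (hL : IsClosed L) (hd : Disjoint K L) :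
    ∃ δ > 0, ∀ p ∈ K, ∀ q ∈ L, δ ≤ dist p q := by
  obtain ⟨δ, hδ, hdisj⟩ := hd.exists_thickenings hK hL
  refine ⟨δ, hδ, fun p hp q hq => ?_⟩
  by_contra hlt
  push_neg at hlt
  have hq1 : q ∈ thickening δ K := by
    rw [mem_thickening_iff]
    exact ⟨p, hp, by rwa [dist_comm]⟩
  have hq2 : q ∈ thickening δ L := self_subset_thickening hδ L hq
  exact hdisj.ne_of_mem hq1 hq2 rfl

open Classical in
/-- Number of times `0 ≤ k < n` with `T^[k] x ∈ K`, as a real number. -/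
noncomputable def wmCnt (T : X → X) (n : ℕ) (K : Set X) (x : X) : ℝ :=
  ((Finset.univ.filter (fun k : Fin n => T^[(k:ℕ)] x ∈ K)).card : ℝ)

theorem wmCnt_nonneg (T : X → X) (n : ℕ) (K : Set X) (x : X) : 0 ≤ wmCnt T n K x :=
  Nat.cast_nonneg _

theorem wmCnt_le (T : X → X) (n : ℕ) (K : Set X) (x : X) : wmCnt T n K x ≤ n := by
  classical
  have hle : (Finset.univ.filter (fun k : Fin n => T^[(k:ℕ)] x ∈ K)).card ≤ n :=
    le_trans (Finset.card_filter_le _ _) (by simp)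
  unfold wmCnt
  exact_mod_cast hle

theorem wmCnt_eq_sum (T : X → X) (n : ℕ) (K : Set X) (x : X) :
    wmCnt T n K x = ∑ k : Fin n, Set.indicator (T^[(k:ℕ)] ⁻¹' K) (fun _ => (1:ℝ)) x := by
  classical
  rw [wmCnt, Finset.card_filter]
  push_cast
  refine Finset.sum_congr rfl fun k _ => ?_
  by_cases h : T^[(k:ℕ)] x ∈ K <;> simp [Set.indicator_apply, h]

theorem wmCnt_measurable [MeasurableSpace X] [BorelSpace X] {T : X → X} (hT : Continuous T)
    (n : ℕ) {K : Set X} (hK : MeasurableSet K) : Measurable (wmCnt T n K) := by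
  simp only [funext (wmCnt_eq_sum T n K)]
  exact Finset.measurable_sum _ fun k _ =>
    measurable_const.indicator ((hT.iterate _).measurable hK)

theorem wmCnt_integral [MeasurableSpace X] [BorelSpace X] {T : X → X} (hT : Continuous T)
    (n : ℕ) {K s : Set X} (hK : MeasurableSet K) (μ : Measure X) [IsFiniteMeasure μ]
    (hKs : ∀ k : ℕ, μ (T^[k] ⁻¹' K ∩ s) = μ K) :
    ∫ x, wmCnt T n K x ∂(μ.restrict s) = n * (μ K).toReal := by
  simp only [funext (wmCnt_eq_sum T n K)]
  rw [integral_finset_sum]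
  · have heach : ∀ k : Fin n,
        ∫ x, Set.indicator (T^[(k:ℕ)] ⁻¹' K) (fun _ => (1:ℝ)) x ∂(μ.restrict s)
          = (μ K).toReal := by
      intro k
      rw [integral_indicator_const (1:ℝ) ((hT.iterate _).measurable hK),
        measureReal_def, Measure.restrict_apply ((hT.iterate _).measurable hK), hKs]
      simp
    simp [heach, Finset.sum_const, nsmul_eq_mul]
  · intro k _
    exact (integrable_const _).indicator ((hT.iterate _).measurable hK)

theorem wm_sum_perm_ge (T : X → X) {n : ℕ} {K L : Set X} {δ : ℝ} (hδ0 : 0 ≤ δ)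
    (hδ : ∀ p ∈ K, ∀ q ∈ L, δ ≤ dist p q) (x y : X) (σ : Equiv.Perm (Fin n)) :
    δ * (wmCnt T n K x + wmCnt T n L y - n)
      ≤ ∑ k : Fin n, dist (T^[(k : ℕ)] x) (T^[(σ k : ℕ)] y) := by
  classical
  set S := Finset.univ.filter (fun k : Fin n => T^[(k:ℕ)] x ∈ K) with hS
  set Q := Finset.univ.filter (fun k : Fin n => T^[(σ k : ℕ)] y ∈ L) with hQ
  have hcard : Q.card = (Finset.univ.filter (fun k : Fin n => T^[(k:ℕ)] y ∈ L)).card := by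
    apply Finset.card_bij (fun k _ => σ k)
    · intro a ha; simp only [hQ, Finset.mem_filter, Finset.mem_univ, true_and] at ha ⊢; exact ha
    · intro a _ b _ hab; exact σ.injective hab
    · intro b hb
      refine ⟨σ.symm b, ?_, by simp⟩
      simp only [hQ, Finset.mem_filter, Finset.mem_univ, true_and] at hb ⊢
      simpa using hb
  have h1 : ((S.card : ℝ) + (Q.card : ℝ) - n) ≤ ((S ∩ Q).card : ℝ) := by
    have hiu := Finset.card_inter_add_card_union S Q
    have h2 : (S ∪ Q).card ≤ n := by
      simpa using Finset.card_le_univ (S ∪ Q)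
    have h2' := (Nat.cast_le (α := ℝ)).2 h2
    have hiu' : ((S ∩ Q).card : ℝ) + ((S ∪ Q).card : ℝ) = (S.card : ℝ) + (Q.card : ℝ) := by
      exact_mod_cast congrArg (Nat.cast (R := ℝ)) hiu
    push_cast at h2'
    linarith
  have hwm : wmCnt T n K x = (S.card : ℝ) := by rw [wmCnt]
  have hwm2 : wmCnt T n L y
      = ((Finset.univ.filter (fun k : Fin n => T^[(k:ℕ)] y ∈ L)).card : ℝ) := by rw [wmCnt]
  calc δ * (wmCnt T n K x + wmCnt T n L y - n)
      ≤ δ * ((S ∩ Q).card : ℝ) := by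
        rw [hwm, hwm2, ← hcard]; exact mul_le_mul_of_nonneg_left h1 hδ0
    _ = ∑ _k ∈ S ∩ Q, δ := by rw [Finset.sum_const, nsmul_eq_mul, mul_comm]
    _ ≤ ∑ k ∈ S ∩ Q, dist (T^[(k : ℕ)] x) (T^[(σ k : ℕ)] y) := by
        refine Finset.sum_le_sum fun k hk => ?_
        simp only [hS, hQ, Finset.mem_inter, Finset.mem_filter, Finset.mem_univ, true_and] at hk
        exact hδ _ hk.1 _ hk.2
    _ ≤ ∑ k : Fin n, dist (T^[(k : ℕ)] x) (T^[(σ k : ℕ)] y) :=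
        Finset.sum_le_sum_of_subset_of_nonneg (Finset.subset_univ _)
          (fun k _ _ => dist_nonneg)

theorem weakMeanN_nonneg (T : X → X) (n : ℕ) (x y : X) : 0 ≤ weakMeanN T n x y :=
  mul_nonneg (by positivity)
    (le_ciInf fun _σ => Finset.sum_nonneg fun _k _ => dist_nonneg)

theorem weakMeanN_le_diam [CompactSpace X] (T : X → X) (n : ℕ) (x y : X) :
    weakMeanN T n x y ≤ diam (univ : Set X) := by
  rcases Nat.eq_zero_or_pos n with rfl | hn
  · simp [weakMeanN, diam_nonneg]
  have h1 : (⨅ σ : Equiv.Perm (Fin n), ∑ k : Fin n, dist (T^[(k : ℕ)] x) (T^[(σ k : ℕ)] y))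
      ≤ ∑ k : Fin n, dist (T^[(k : ℕ)] x) (T^[((1 : Equiv.Perm (Fin n)) k : ℕ)] y) :=
    ciInf_le ⟨0, fun r ⟨σ, hσ⟩ => hσ ▸ Finset.sum_nonneg fun k _ => dist_nonneg⟩ 1
  have h2 : ∑ k : Fin n, dist (T^[(k : ℕ)] x) (T^[((1 : Equiv.Perm (Fin n)) k : ℕ)] y)
      ≤ n * diam (univ : Set X) := by
    calc _ ≤ ∑ _k : Fin n, diam (univ : Set X) :=
          Finset.sum_le_sum fun k _ => dist_le_diam_of_mem
            isCompact_univ.isBounded (mem_univ _) (mem_univ _)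
      _ = n * diam (univ : Set X) := by simp [Finset.sum_const, nsmul_eq_mul]
  unfold weakMeanN
  rw [div_mul_eq_mul_div, one_mul, div_le_iff₀ (by positivity)]
  calc (⨅ σ : Equiv.Perm (Fin n), ∑ k : Fin n, dist (T^[(k : ℕ)] x) (T^[(σ k : ℕ)] y))
      ≤ n * diam (univ : Set X) := h1.trans h2
    _ = diam (univ : Set X) * n := mul_comm _ _


/-- If `μ × μ`-almost every pair of points is at weak-mean distance `0`, then `μ`
is ergodic. -/
theorem ergodic_of_weakMean_zero [MeasurableSpace X] [BorelSpace X] [CompactSpace X]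
    (T : X → X) (hT : Continuous T) (μ : Measure X) [IsProbabilityMeasure μ]
    (hμ : MeasurePreserving T μ μ)
    (h : μ.prod μ {p : X × X | weakMean T p.1 p.2 = 0} = 1) :
    Ergodic T μ := by
  classical
  refine ⟨hμ, ⟨fun s hs hTs => ?_⟩⟩
  rw [eventuallyConst_set]
  by_contra hcon
  push_neg at hcon
  obtain ⟨h1, h2⟩ := hcon
  have hsc_ne : μ sᶜ ≠ 0 := by
    intro h0
    exact h1 (by rw [ae_iff]; simp only [not_not]; exact h0)
  have hs_ne : μ s ≠ 0 := by
    intro h0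
    exact h2 (by rw [ae_iff]; simpa using h0)
  set A := (μ s).toReal with hAdef
  set B := (μ sᶜ).toReal with hBdef
  have hA : 0 < A := ENNReal.toReal_pos hs_ne (measure_ne_top μ s)
  have hB : 0 < B := ENNReal.toReal_pos hsc_ne (measure_ne_top μ sᶜ)
  have hAB : A + B = 1 := by
    have hadd : μ s + μ sᶜ = 1 := by
      rw [measure_add_measure_compl hs, measure_univ]
    rw [hAdef, hBdef, ← ENNReal.toReal_add (measure_ne_top μ s) (measure_ne_top μ sᶜ), hadd,
      ENNReal.toReal_one]
  set ε : ℝ := A * B / 2 with hεdef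
  have hε : 0 < ε := by positivity
  obtain ⟨K, hKsub, hKcomp, hKlt⟩ :=
    hs.exists_isCompact_lt_add (measure_ne_top μ s)
      (ENNReal.ofReal_pos.2 hε).ne'
  obtain ⟨L, hLsub, hLcomp, hLlt⟩ :=
    hs.compl.exists_isCompact_lt_add (measure_ne_top μ sᶜ)
      (ENNReal.ofReal_pos.2 hε).ne'
  set kK : ℝ := (μ K).toReal with hkKdef
  set kL : ℝ := (μ L).toReal with hkLdef
  have hkK0 : 0 ≤ kK := ENNReal.toReal_nonneg
  have hkL0 : 0 ≤ kL := ENNReal.toReal_nonneg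
  have hkK : A - ε ≤ kK := by
    have := (ENNReal.toReal_le_toReal (measure_ne_top μ s) (by
      exact ENNReal.add_ne_top.2 ⟨measure_ne_top μ K, ENNReal.ofReal_ne_top⟩)).2 hKlt.le
    rw [ENNReal.toReal_add (measure_ne_top μ K) ENNReal.ofReal_ne_top,
      ENNReal.toReal_ofReal hε.le] at this
    linarith
  have hkL : B - ε ≤ kL := by
    have := (ENNReal.toReal_le_toReal (measure_ne_top μ sᶜ) (by
      exact ENNReal.add_ne_top.2 ⟨measure_ne_top μ L, ENNReal.ofReal_ne_top⟩)).2 hLlt.le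
    rw [ENNReal.toReal_add (measure_ne_top μ L) ENNReal.ofReal_ne_top,
      ENNReal.toReal_ofReal hε.le] at this
    linarith
  have hd : Disjoint K L := disjoint_compl_right.mono hKsub hLsub
  obtain ⟨δ, hδ0, hδ⟩ := wm_exists_sep hKcomp hLcomp.isClosed hd
  -- invariance of `s` under iterates
  have hiter : ∀ k : ℕ, T^[k] ⁻¹' s = s := by
    intro k
    induction k with
    | zero => simp
    | succ k ih => rw [Function.iterate_succ, Set.preimage_comp, ih, hTs]
  have hiterc : ∀ k : ℕ, T^[k] ⁻¹' sᶜ = sᶜ := fun k => by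
    rw [Set.preimage_compl, hiter]
  have hKinv : ∀ k : ℕ, μ (T^[k] ⁻¹' K ∩ s) = μ K := by
    intro k
    have e : T^[k] ⁻¹' K ∩ s = T^[k] ⁻¹' (K ∩ s) := by
      rw [Set.preimage_inter, hiter]
    rw [e, Set.inter_eq_self_of_subset_left hKsub]
    exact (hμ.iterate k).measure_preimage hKcomp.measurableSet.nullMeasurableSet
  have hLinv : ∀ k : ℕ, μ (T^[k] ⁻¹' L ∩ sᶜ) = μ L := by
    intro k
    have e : T^[k] ⁻¹' L ∩ sᶜ = T^[k] ⁻¹' (L ∩ sᶜ) := by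
      rw [Set.preimage_inter, hiterc]
    rw [e, Set.inter_eq_self_of_subset_left hLsub]
    exact (hμ.iterate k).measure_preimage hLcomp.measurableSet.nullMeasurableSet
  -- the product measure restricted to `s ×ˢ sᶜ`
  set ρ : Measure (X × X) := (μ.restrict s).prod (μ.restrict sᶜ) with hρdef
  -- measurability
  have hg_meas : ∀ n : ℕ, Measurable fun p : X × X => weakMeanN T n p.1 p.2 := by
    intro n
    unfold weakMeanN
    apply Measurable.const_mul
    apply Measurable.iInf
    intro σ
    apply Finset.measurable_sum
    intro k _
    exact (((hT.iterate _).comp continuous_fst).dist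
      ((hT.iterate _).comp continuous_snd)).measurable
  have hF_meas : Measurable fun p : X × X => weakMean T p.1 p.2 := by
    unfold weakMean
    exact Measurable.limsup hg_meas
  -- a.e. convergence to 0
  have hae : ∀ᵐ p ∂(μ.prod μ), weakMean T p.1 p.2 = 0 := by
    have hmeas : MeasurableSet {p : X × X | weakMean T p.1 p.2 = 0} :=
      hF_meas (measurableSet_singleton 0)
    rw [ae_iff]
    have hc : {p : X × X | ¬ weakMean T p.1 p.2 = 0}
        = {p : X × X | weakMean T p.1 p.2 = 0}ᶜ := rfl
    rw [hc, measure_compl hmeas (measure_ne_top _ _), h, measure_univ, tsub_self]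
  have haeρ : ∀ᵐ p ∂ρ, weakMean T p.1 p.2 = 0 := by
    rw [hρdef, Measure.prod_restrict]
    exact ae_restrict_of_ae hae
  set D : ℝ := diam (univ : Set X) with hDdef
  have htend : ∀ᵐ p ∂ρ, Tendsto (fun n => weakMeanN T n p.1 p.2) atTop (nhds 0) := by
    filter_upwards [haeρ] with p hp
    have hbddle : IsBoundedUnder (· ≤ ·) atTop (fun n => weakMeanN T n p.1 p.2) :=
      isBoundedUnder_of ⟨D, fun n => weakMeanN_le_diam T n p.1 p.2⟩
    have hbddge : IsBoundedUnder (· ≥ ·) atTop (fun n => weakMeanN T n p.1 p.2) :=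
      isBoundedUnder_of ⟨0, fun n => weakMeanN_nonneg T n p.1 p.2⟩
    refine tendsto_of_le_liminf_of_limsup_le ?_ ?_ hbddle hbddge
    · exact le_liminf_of_le hbddle.isCoboundedUnder_ge
        (Eventually.of_forall fun n => weakMeanN_nonneg T n p.1 p.2)
    · exact le_of_eq hp
  -- dominated convergence
  have hdc : Tendsto (fun n => ∫ p, weakMeanN T n p.1 p.2 ∂ρ) atTop
      (nhds (∫ _p, (0:ℝ) ∂ρ)) := by
    apply tendsto_integral_of_dominated_convergence (fun _ => D)
    · exact fun n => (hg_meas n).aestronglyMeasurable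
    · exact integrable_const D
    · intro n
      filter_upwards with p
      rw [Real.norm_eq_abs, abs_of_nonneg (weakMeanN_nonneg T n p.1 p.2)]
      exact weakMeanN_le_diam T n p.1 p.2
    · exact htend
  rw [integral_zero] at hdc
  -- uniform lower bound on the integrals
  have hlow : ∀ n : ℕ, 1 ≤ n → δ * (A * B / 2) ≤ ∫ p, weakMeanN T n p.1 p.2 ∂ρ := by
    intro n hn
    have hnR : (0:ℝ) < n := by exact_mod_cast hn
    -- pointwise lower bound
    have hpt : ∀ p : X × X,
        (δ / n) * (wmCnt T n K p.1 + wmCnt T n L p.2 - n) ≤ weakMeanN T n p.1 p.2 := by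
      intro p
      have hciInf : δ * (wmCnt T n K p.1 + wmCnt T n L p.2 - n)
          ≤ ⨅ σ : Equiv.Perm (Fin n),
              ∑ k : Fin n, dist (T^[(k : ℕ)] p.1) (T^[(σ k : ℕ)] p.2) :=
        le_ciInf fun σ => wm_sum_perm_ge T hδ0.le hδ p.1 p.2 σ
      have h2 := mul_le_mul_of_nonneg_left hciInf
        (le_of_lt (by positivity : (0:ℝ) < 1 / n))
      calc (δ / n) * (wmCnt T n K p.1 + wmCnt T n L p.2 - n)
          = (1 / n) * (δ * (wmCnt T n K p.1 + wmCnt T n L p.2 - n)) := by ring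
        _ ≤ weakMeanN T n p.1 p.2 := h2
    -- integrabilities
    have hm1 : Measurable fun p : X × X => wmCnt T n K p.1 :=
      (wmCnt_measurable hT n hKcomp.measurableSet).comp measurable_fst
    have hm2 : Measurable fun p : X × X => wmCnt T n L p.2 :=
      (wmCnt_measurable hT n hLcomp.measurableSet).comp measurable_snd
    have hI1 : Integrable (fun p : X × X => wmCnt T n K p.1) ρ := by
      refine Integrable.mono' (integrable_const (n : ℝ)) hm1.aestronglyMeasurable ?_
      filter_upwards with p
      rw [Real.norm_eq_abs, abs_of_nonneg (wmCnt_nonneg T n K p.1)]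
      exact wmCnt_le T n K p.1
    have hI2 : Integrable (fun p : X × X => wmCnt T n L p.2) ρ := by
      refine Integrable.mono' (integrable_const (n : ℝ)) hm2.aestronglyMeasurable ?_
      filter_upwards with p
      rw [Real.norm_eq_abs, abs_of_nonneg (wmCnt_nonneg T n L p.2)]
      exact wmCnt_le T n L p.2
    have hI12 : Integrable (fun p : X × X => wmCnt T n K p.1 + wmCnt T n L p.2) ρ :=
      hI1.add hI2
    have hI12n : Integrable (fun p : X × X => wmCnt T n K p.1 + wmCnt T n L p.2 - n) ρ :=
      hI12.sub (integrable_const (n : ℝ))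
    have hIl : Integrable
        (fun p : X × X => (δ / n) * (wmCnt T n K p.1 + wmCnt T n L p.2 - n)) ρ :=
      hI12n.const_mul (δ / n)
    have hIg : Integrable (fun p : X × X => weakMeanN T n p.1 p.2) ρ := by
      refine Integrable.mono' (integrable_const D) (hg_meas n).aestronglyMeasurable ?_
      filter_upwards with p
      rw [Real.norm_eq_abs, abs_of_nonneg (weakMeanN_nonneg T n p.1 p.2)]
      exact weakMeanN_le_diam T n p.1 p.2
    have hmono := integral_mono hIl hIg hpt
    -- compute the integral of the lower bound
    have e1 : ∫ p, wmCnt T n K p.1 ∂ρ = (n * kK) * B := by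
      have := integral_prod_mul (μ := μ.restrict s) (ν := μ.restrict sᶜ)
        (f := wmCnt T n K) (g := fun _ => (1:ℝ))
      simp only [mul_one] at this
      rw [hρdef, this, wmCnt_integral hT n hKcomp.measurableSet μ hKinv]
      simp [hBdef, hkKdef, measureReal_def]
    have e2 : ∫ p, wmCnt T n L p.2 ∂ρ = A * (n * kL) := by
      have := integral_prod_mul (μ := μ.restrict s) (ν := μ.restrict sᶜ)
        (f := fun _ => (1:ℝ)) (g := wmCnt T n L)
      simp only [one_mul] at this
      rw [hρdef, this, wmCnt_integral hT n hLcomp.measurableSet μ hLinv]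
      simp [hAdef, hkLdef, measureReal_def]
    have e3 : ∫ _p : X × X, (n : ℝ) ∂ρ = n * (A * B) := by
      rw [integral_const, smul_eq_mul]
      have : ρ univ = μ s * μ sᶜ := by
        rw [hρdef, ← Set.univ_prod_univ, Measure.prod_prod,
          Measure.restrict_apply_univ, Measure.restrict_apply_univ]
      rw [measureReal_def, this, ENNReal.toReal_mul]
      ring
    have ecomp : ∫ p, (δ / n) * (wmCnt T n K p.1 + wmCnt T n L p.2 - n) ∂ρ
        = (δ / n) * ((n * kK) * B + A * (n * kL) - n * (A * B)) := by
      rw [integral_const_mul, integral_sub hI12 (integrable_const (n : ℝ)),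
        integral_add hI1 hI2, e1, e2, e3]
    have efin : (δ / n) * ((n * kK) * B + A * (n * kL) - n * (A * B))
        = δ * (kK * B + A * kL - A * B) := by
      field_simp
    have hfinal : δ * (A * B / 2) ≤ δ * (kK * B + A * kL - A * B) := by
      apply mul_le_mul_of_nonneg_left _ hδ0.le
      nlinarith [hkK, hkL, hA, hB, hAB]
    calc δ * (A * B / 2) ≤ δ * (kK * B + A * kL - A * B) := hfinal
      _ = ∫ p, (δ / n) * (wmCnt T n K p.1 + wmCnt T n L p.2 - n) ∂ρ := by
          rw [ecomp, efin]
      _ ≤ ∫ p, weakMeanN T n p.1 p.2 ∂ρ := hmono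
  have hle : δ * (A * B / 2) ≤ 0 :=
    ge_of_tendsto hdc (eventually_atTop.2 ⟨1, hlow⟩)
  nlinarith [hδ0, hA, hB, hle]
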